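/- Let A, B ∈ ℝ^{N×N} with |A| ≤ B entrywise, assume B is irreducible, let u ∈ ℝ^N be a nonzero vector with Au = u, and assume B|u| = |u|. If in addition B is primitive (i.e., ρ(B) is the only eigenvalue of B with modulus ρ(B)), then 1 is the only complex eigenvalue of A with modulus 1. -/

import Mathlib

open Filter

/-- A matrix is irreducible if the directed graph on `Fin N` with an edge from `k` to `j`
whenever `M j k ≠ 0` is strongly connected. -/
def MatIrred {N : ℕ} (M : Matrix (Fin N) (Fin N) ℝ) : Prop :=
  ∀ a b : Fin N, Relation.TransGen (fun k j => M j k ≠ 0) a b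

/-- The spectral radius of a real matrix: the maximum of the absolute values of its
complex eigenvalues. -/
noncomputable def specRad {N : ℕ} (M : Matrix (Fin N) (Fin N) ℝ) : ℝ :=
  sSup ((fun z : ℂ => ‖z‖) '' spectrum ℂ (M.map Complex.ofReal))

section Helpers

variable {N : ℕ} {B : Matrix (Fin N) (Fin N) ℝ}

private lemma mulVec_apply' {α : Type*} [NonUnitalNonAssocSemiring α]
    (M : Matrix (Fin N) (Fin N) α) (w : Fin N → α) (i : Fin N) :
    M.mulVec w i = ∑ j, M i j * w j := rfl

private lemma mulVec_mono' (hB : ∀ i j, 0 ≤ B i j) {w z : Fin N → ℝ} (h : ∀ i, w i ≤ z i) :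
    ∀ i, B.mulVec w i ≤ B.mulVec z i := fun i => by
  rw [mulVec_apply', mulVec_apply']
  exact Finset.sum_le_sum fun j _ => mul_le_mul_of_nonneg_left (h j) (hB i j)

private lemma mulVec_const_mul (M : Matrix (Fin N) (Fin N) ℝ) (c : ℝ) (w : Fin N → ℝ)
    (i : Fin N) : M.mulVec (fun j => c * w j) i = c * M.mulVec w i := by
  rw [mulVec_apply', mulVec_apply', Finset.mul_sum]
  exact Finset.sum_congr rfl fun j _ => by ring

private lemma fixed_pos (hB0 : ∀ i j, 0 ≤ B i j) (hB : MatIrred B) {w : Fin N → ℝ}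
    (hw0 : ∀ i, 0 ≤ w i) (hw : B.mulVec w = w) (hne : w ≠ 0) : ∀ i, 0 < w i := by
  obtain ⟨a, ha⟩ : ∃ a, w a ≠ 0 := by
    by_contra h
    push_neg at h
    exact hne (funext h)
  have key : ∀ {x y : Fin N}, Relation.TransGen (fun k j => B j k ≠ 0) x y →
      0 < w x → 0 < w y := by
    intro x y t
    have step : ∀ {k j : Fin N}, B j k ≠ 0 → 0 < w k → 0 < w j := by
      intro k j hjk hk
      have hBjk : 0 < B j k := (hB0 j k).lt_of_ne (Ne.symm hjk)
      have : 0 < B.mulVec w j := by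
        rw [mulVec_apply']
        have h1 : B j k * w k ≤ ∑ l, B j l * w l :=
          Finset.single_le_sum (fun l _ => mul_nonneg (hB0 j l) (hw0 l)) (Finset.mem_univ k)
        nlinarith
      rwa [hw] at this
    induction t with
    | single h => exact fun hx => step h hx
    | tail _ h ih => exact fun hx => step h (ih hx)
  exact fun b => key (hB a b) ((hw0 a).lt_of_ne (Ne.symm ha))

private lemma entry_apply' (M P : Matrix (Fin N) (Fin N) ℝ) (i j : Fin N) :
    (M * P) i j = ∑ k, M i k * P k j := by
  simp [Matrix.mul_apply]

private lemma pow_entry_nonneg (hB : ∀ i j, 0 ≤ B i j) : ∀ m i j, 0 ≤ (B ^ m) i j := by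
  intro m
  induction m with
  | zero => intro i j; simp [Matrix.one_apply]; positivity
  | succ m ih =>
    intro i j
    rw [pow_succ, entry_apply']
    exact Finset.sum_nonneg fun k _ => mul_nonneg (ih i k) (hB k j)

private lemma exists_pow_pos (hB0 : ∀ i j, 0 ≤ B i j) (hB : MatIrred B) :
    ∃ K, ∀ i j, 0 < (((1 + B : Matrix (Fin N) (Fin N) ℝ)) ^ K) i j := by
  set C := 1 + B with hC
  have hC0 : ∀ i j, 0 ≤ C i j := by
    intro i j
    simp only [hC, Matrix.add_apply, Matrix.one_apply]
    have := hB0 i j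
    split <;> linarith
  have hCB : ∀ i j, B i j ≤ C i j := by
    intro i j
    simp only [hC, Matrix.add_apply, Matrix.one_apply]
    split <;> linarith
  have hCd : ∀ j, 1 ≤ C j j := by
    intro j
    simp only [hC, Matrix.add_apply, Matrix.one_apply_eq]
    linarith [hB0 j j]
  have hCpow := pow_entry_nonneg hC0
  have hmono : ∀ m i j, (C ^ m) i j ≤ (C ^ (m+1)) i j := by
    intro m i j
    rw [pow_succ, entry_apply']
    have h1 : (C ^ m) i j * C j j ≤ ∑ k, (C ^ m) i k * C k j :=
      Finset.single_le_sum (fun k _ => mul_nonneg (hCpow m i k) (hC0 k j)) (Finset.mem_univ j)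
    nlinarith [hCpow m i j, hCd j]
  have hmono' : ∀ {m m'} (_ : m ≤ m') (i j : Fin N), (C ^ m) i j ≤ (C ^ m') i j := by
    intro m m' h i j
    induction m', h using Nat.le_induction with
    | base => exact le_refl _
    | succ m' hm ih => exact le_trans ih (hmono m' i j)
  have hex : ∀ i j : Fin N, ∃ m, 0 < (C ^ m) i j := by
    intro i j
    have t := hB j i
    clear hB
    induction t with
    | single h =>
      exact ⟨1, by rw [pow_one]; exact lt_of_lt_of_le ((hB0 _ _).lt_of_ne (Ne.symm h)) (hCB _ _)⟩
    | tail _ h ih =>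
      obtain ⟨m, hm⟩ := ih
      refine ⟨m + 1, ?_⟩
      rw [pow_succ', entry_apply']
      rename_i b c _
      have h1 : C c b * (C ^ m) b j ≤ ∑ k, C c k * (C ^ m) k j :=
        Finset.single_le_sum (fun k _ => mul_nonneg (hC0 c k) (hCpow m k j)) (Finset.mem_univ b)
      have h2 : 0 < C c b := lt_of_lt_of_le ((hB0 _ _).lt_of_ne (Ne.symm h)) (hCB _ _)
      nlinarith
  choose m hm using fun p : Fin N × Fin N => hex p.1 p.2
  refine ⟨Finset.univ.sup m, fun i j => ?_⟩
  exact lt_of_lt_of_le (hm (i, j)) (hmono' (Finset.le_sup (Finset.mem_univ (i, j))) i j)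

private lemma subinv_eq (hB0 : ∀ i j, 0 ≤ B i j) (hB : MatIrred B) {p : Fin N → ℝ}
    (hp : ∀ i, 0 < p i) (hBp : B.mulVec p = p) {w : Fin N → ℝ} (hw0 : ∀ i, 0 ≤ w i)
    (hge : ∀ i, w i ≤ B.mulVec w i) : B.mulVec w = w := by
  by_contra hne
  set s : Fin N → ℝ := fun i => B.mulVec w i - w i with hs
  have hs0 : ∀ i, 0 ≤ s i := fun i => by simp [hs]; linarith [hge i]
  have hsne : ∃ i, 0 < s i := by
    by_contra h
    push_neg at h
    exact hne (funext fun i => by have := hs0 i; have := h i; simp [hs] at *; linarith)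
  have hwne : ∃ i, 0 < w i := by
    by_contra h
    push_neg at h
    have hw0' : w = 0 := funext fun i => le_antisymm (h i) (hw0 i)
    obtain ⟨i, hi⟩ := hsne
    simp [hs, hw0', Matrix.mulVec_zero] at hi
  obtain ⟨K, hK⟩ := exists_pow_pos hB0 hB
  set C : Matrix (Fin N) (Fin N) ℝ := (1 + B) ^ K with hC
  have hC0 : ∀ i j, 0 ≤ C i j := by
    intro i j; exact le_of_lt (hK i j)
  set z : Fin N → ℝ := C.mulVec w with hz
  set s' : Fin N → ℝ := C.mulVec s with hs'
  have posmul : ∀ (v : Fin N → ℝ), (∀ i, 0 ≤ v i) → (∃ i, 0 < v i) → ∀ i, 0 < C.mulVec v i := by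
    intro v hv0 ⟨j0, hj0⟩ i
    rw [mulVec_apply']
    have h1 : C i j0 * v j0 ≤ ∑ l, C i l * v l :=
      Finset.single_le_sum (fun l _ => mul_nonneg (hC0 i l) (hv0 l)) (Finset.mem_univ j0)
    nlinarith [hK i j0]
  have hzpos : ∀ i, 0 < z i := posmul w hw0 hwne
  have hspos : ∀ i, 0 < s' i := posmul s hs0 hsne
  have hcomm : B * C = C * B := by
    have : Commute B C := (Commute.one_right B).add_right (Commute.refl B) |>.pow_right K
    exact this
  have hBz : ∀ i, B.mulVec z i = z i + s' i := by
    intro i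
    have h1 : B.mulVec z = C.mulVec (B.mulVec w) := by
      rw [hz, Matrix.mulVec_mulVec, Matrix.mulVec_mulVec, hcomm]
    have h2 : B.mulVec w = fun i => w i + s i := funext fun i => by simp [hs]
    rw [h1, h2]
    have : C.mulVec (fun i => w i + s i) = fun i => C.mulVec w i + C.mulVec s i := by
      have := Matrix.mulVec_add C w s
      convert this using 2
      all_goals rfl
    rw [this]
  clear hz hs'
  clear_value z s'
  have hN : Nonempty (Fin N) := ⟨hwne.choose⟩
  obtain ⟨i0, -, hi0⟩ := Finset.exists_min_image Finset.univ (fun i => s' i / z i)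
    ⟨hwne.choose, Finset.mem_univ _⟩
  set ε : ℝ := s' i0 / z i0 with hε
  have hεpos : 0 < ε := div_pos (hspos i0) (hzpos i0)
  have hBzε : ∀ i, (1 + ε) * z i ≤ B.mulVec z i := by
    intro i
    rw [hBz i]
    have h1 : ε ≤ s' i / z i := hi0 i (Finset.mem_univ i)
    have h2 : ε * z i ≤ s' i := (le_div_iff₀ (hzpos i)).mp h1
    nlinarith
  have hiter : ∀ n, ∀ i, (1 + ε) ^ n * z i ≤ (B ^ n).mulVec z i := by
    intro n
    induction n with
    | zero => intro i; simp [Matrix.one_mulVec]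
    | succ n ih =>
      intro i
      have h1 : (B ^ (n+1)).mulVec z = (B ^ n).mulVec (B.mulVec z) := by
        rw [Matrix.mulVec_mulVec, ← pow_succ]
      have h2 : ∀ i, (B ^ n).mulVec (fun j => (1 + ε) * z j) i ≤ (B ^ n).mulVec (B.mulVec z) i :=
        mulVec_mono' (pow_entry_nonneg hB0 n) hBzε
      have h3 : (B ^ n).mulVec (fun j => (1 + ε) * z j) = fun i => (1 + ε) * (B ^ n).mulVec z i :=
        funext fun i => mulVec_const_mul _ _ _ i
      rw [h1]
      calc (1 + ε) ^ (n+1) * z i = (1 + ε) * ((1+ε)^n * z i) := by ring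
        _ ≤ (1 + ε) * ((B ^ n).mulVec z i) := by nlinarith [ih i, hεpos]
        _ = (B ^ n).mulVec (fun j => (1 + ε) * z j) i := by rw [h3]
        _ ≤ _ := h2 i
  obtain ⟨i1, -, hi1⟩ := Finset.exists_max_image Finset.univ (fun i => z i / p i)
    ⟨hwne.choose, Finset.mem_univ _⟩
  set c : ℝ := z i1 / p i1 with hc
  have hzc : ∀ i, z i ≤ c * p i := by
    intro i
    have h := hi1 i (Finset.mem_univ i)
    rw [div_le_div_iff₀ (hp i) (hp i1)] at h
    have hcp : c * p i = z i1 * p i / p i1 := by rw [hc]; ring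
    rw [hcp, le_div_iff₀ (hp i1)]
    linarith
  have hBnp : ∀ n, (B ^ n).mulVec p = p := by
    intro n
    induction n with
    | zero => simp [Matrix.one_mulVec]
    | succ n ih => rw [pow_succ, ← Matrix.mulVec_mulVec, hBp, ih]
  have hbound : ∀ n i, (B ^ n).mulVec z i ≤ c * p i := by
    intro n i
    have h1 : ∀ i, (B ^ n).mulVec z i ≤ (B ^ n).mulVec (fun j => c * p j) i :=
      mulVec_mono' (pow_entry_nonneg hB0 n) hzc
    calc (B ^ n).mulVec z i ≤ (B ^ n).mulVec (fun j => c * p j) i := h1 i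
      _ = c * (B ^ n).mulVec p i := mulVec_const_mul _ _ _ i
      _ = c * p i := by rw [hBnp n]
  obtain ⟨n, hn⟩ := pow_unbounded_of_one_lt (c * p i0 / z i0) (by linarith : (1:ℝ) < 1 + ε)
  have h1 := hiter n i0
  have h2 := hbound n i0
  have h3 : (1 + ε) ^ n * z i0 ≤ c * p i0 := le_trans h1 h2
  rw [div_lt_iff₀ (hzpos i0)] at hn
  linarith

private lemma mem_spectrum_iff_eig (M : Matrix (Fin N) (Fin N) ℂ) (μ : ℂ) :
    μ ∈ spectrum ℂ M ↔ ∃ v : Fin N → ℂ, v ≠ 0 ∧ M.mulVec v = μ • v := by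
  rw [← AlgEquiv.spectrum_eq (Matrix.toLinAlgEquiv' : Matrix (Fin N) (Fin N) ℂ ≃ₐ[ℂ] _) M,
    ← Module.End.hasEigenvalue_iff_mem_spectrum]
  constructor
  · intro h
    obtain ⟨v, hv⟩ := h.exists_hasEigenvector
    exact ⟨v, hv.2, by simpa [Matrix.toLinAlgEquiv'_apply] using hv.apply_eq_smul⟩
  · rintro ⟨v, hv0, hv⟩
    exact Module.End.hasEigenvalue_of_hasEigenvector ⟨Module.End.mem_eigenspace_iff.2 (by
      simpa [Matrix.toLinAlgEquiv'_apply] using hv), hv0⟩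

private lemma norm_mulVec_apply (M : Matrix (Fin N) (Fin N) ℝ) (x : Fin N → ℂ) (i : Fin N) :
    (M.map Complex.ofReal).mulVec x i = ∑ j, (M i j : ℂ) * x j := by
  rw [mulVec_apply']
  exact Finset.sum_congr rfl fun j _ => by rw [Matrix.map_apply]

private lemma ofReal_sum_mul (M : Matrix (Fin N) (Fin N) ℝ) (w : Fin N → ℝ) (i : Fin N) :
    ∑ j, (M i j : ℂ) * ((w j : ℝ) : ℂ) = ((M.mulVec w i : ℝ) : ℂ) := by
  rw [mulVec_apply']
  push_cast
  rfl

end Helpers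

/-- **Domination of matrices (primitive case).** Let `|A| ≤ B` entrywise, `B` irreducible,
`u ≠ 0` with `Au = u`, and `B|u| = |u|`. If in addition `B` is primitive, i.e. `ρ(B)` is
the only complex eigenvalue of `B` of modulus `ρ(B)`, then `1` is the only complex
eigenvalue of `A` of modulus `1`. -/
theorem domination_primitive_peripheral_spectrum
    {N : ℕ} (A B : Matrix (Fin N) (Fin N) ℝ)
    (hAB : ∀ j k, |A j k| ≤ B j k) (hB : MatIrred B)
    (u : Fin N → ℝ) (hu : u ≠ 0) (hAu : A.mulVec u = u)
    (hBu : B.mulVec (fun i => |u i|) = (fun i => |u i|))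
    (hprim : ∀ μ ∈ spectrum ℂ (B.map Complex.ofReal),
      ‖μ‖ = specRad B → μ = (specRad B : ℂ)) :
    ∀ μ ∈ spectrum ℂ (A.map Complex.ofReal), ‖μ‖ = 1 → μ = 1 := by
  intro μ hμ habs
  have hB0 : ∀ i j, 0 ≤ B i j := fun i j => le_trans (abs_nonneg _) (hAB i j)
  obtain ⟨j0, hj0⟩ : ∃ j, u j ≠ 0 := by
    by_contra h; push_neg at h; exact hu (funext h)
  set p : Fin N → ℝ := fun i => |u i| with hpdef
  have hpne : p ≠ 0 := fun h => hj0 (abs_eq_zero.mp (congrFun h j0))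
  have hp : ∀ i, 0 < p i := fixed_pos hB0 hB (fun i => abs_nonneg _) hBu hpne
  have hμ0 : μ ≠ 0 := fun h => by rw [h] at habs; simp at habs
  -- complexified A u = u
  have hAuC : ∀ i, ∑ j, (A i j : ℂ) * (u j : ℂ) = (u i : ℂ) := by
    intro i
    rw [ofReal_sum_mul A u i, hAu]
  -- eigenvector of A for μ
  obtain ⟨v, hv0, hveq⟩ := (mem_spectrum_iff_eig _ μ).mp hμ
  set a : Fin N → ℝ := fun i => ‖v i‖ with ha
  have hAv : ∀ i, ∑ j, (A i j : ℂ) * v j = μ * v i := by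
    intro i
    have := congrFun hveq i
    rw [norm_mulVec_apply] at this
    simpa using this
  -- Step A : a ≤ B a pointwise
  have hstepA : ∀ i, a i ≤ B.mulVec a i := by
    intro i
    rw [mulVec_apply']
    have h1 : a i = ‖∑ j, (A i j : ℂ) * v j‖ := by
      rw [hAv i, norm_mul, habs, one_mul]
    rw [h1]
    refine le_trans (norm_sum_le _ _) (Finset.sum_le_sum fun j _ => ?_)
    rw [norm_mul, Complex.norm_real, Real.norm_eq_abs]
    exact mul_le_mul_of_nonneg_right (hAB i j) (norm_nonneg _)
  -- Step B : B a = a, a > 0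
  have hBa : B.mulVec a = a :=
    subinv_eq hB0 hB hp hBu (fun i => norm_nonneg _) hstepA
  have hane : a ≠ 0 := fun h => hv0 (funext fun i => by
    have := congrFun h i
    simpa [ha] using this)
  have hapos : ∀ i, 0 < a i := fixed_pos hB0 hB (fun i => norm_nonneg _) hBa hane
  have hvi0 : ∀ i, v i ≠ 0 := fun i h => (hapos i).ne' (by simp [ha, h])
  -- Step C : the key entrywise relation
  have R : ∀ i j, ((a i : ℝ) : ℂ) * ((A i j : ℂ) * v j) = (μ * v i) * ((B i j : ℂ) * (a j : ℂ)) := by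
    intro i
    set g : ℂ := μ * v i with hg
    have hgabs : ‖g‖ = a i := by rw [hg, norm_mul, habs, one_mul]
    have hsum_t : ∑ j, ((starRingEnd ℂ) g * ((A i j : ℂ) * v j)) = (((a i)^2 : ℝ) : ℂ) := by
      rw [← Finset.mul_sum, hAv i, ← hg, mul_comm, Complex.mul_conj]
      norm_cast
      rw [← Complex.sq_norm, hgabs]
    have habs_t : ∀ j, ‖(starRingEnd ℂ) g * ((A i j : ℂ) * v j)‖ ≤
        a i * (B i j * a j) := by
      intro j
      rw [norm_mul, Complex.norm_conj, hgabs, norm_mul, Complex.norm_real, Real.norm_eq_abs]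
      have h1 : |A i j| * ‖v j‖ ≤ B i j * a j :=
        mul_le_mul_of_nonneg_right (hAB i j) (norm_nonneg _)
      nlinarith [hapos i, norm_nonneg (v j), hapos i]
    have hre_le : ∀ j ∈ Finset.univ, ((starRingEnd ℂ) g * ((A i j : ℂ) * v j)).re ≤
        a i * (B i j * a j) :=
      fun j _ => le_trans (Complex.re_le_norm _) (habs_t j)
    have hsum_re : ∑ j, ((starRingEnd ℂ) g * ((A i j : ℂ) * v j)).re =
        ∑ j, a i * (B i j * a j) := by
      rw [← Complex.re_sum, hsum_t]
      have h2 : ∑ j, a i * (B i j * a j) = a i ^ 2 := by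
        rw [← Finset.mul_sum, ← mulVec_apply', hBa]
        ring
      rw [h2]
      norm_cast
    have heq := (Finset.sum_eq_sum_iff_of_le hre_le).mp hsum_re
    intro j
    have h1 : ((starRingEnd ℂ) g * ((A i j : ℂ) * v j)).re = a i * (B i j * a j) :=
      heq j (Finset.mem_univ j)
    have h3 : ‖(starRingEnd ℂ) g * ((A i j : ℂ) * v j)‖ =
        ((starRingEnd ℂ) g * ((A i j : ℂ) * v j)).re := by
      refine le_antisymm ?_ (Complex.re_le_norm _)
      rw [h1]; exact habs_t j
    have h4 : ((starRingEnd ℂ) g * ((A i j : ℂ) * v j)).im = 0 := by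
      have h5 := Complex.sq_norm ((starRingEnd ℂ) g * ((A i j : ℂ) * v j))
      rw [h3] at h5
      rw [Complex.normSq_apply] at h5
      nlinarith
    have ht : (starRingEnd ℂ) g * ((A i j : ℂ) * v j) = ((a i * (B i j * a j) : ℝ) : ℂ) := by
      apply Complex.ext
      · rw [h1]; simp
      · rw [h4]; simp
    have hgg : g * (starRingEnd ℂ) g = (((a i : ℝ)) : ℂ)^2 := by
      rw [Complex.mul_conj]
      norm_cast
      rw [← Complex.sq_norm, hgabs]
    have hai : (((a i : ℝ)) : ℂ) ≠ 0 := by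
      exact_mod_cast (hapos i).ne'
    apply mul_left_cancel₀ hai
    calc ((a i : ℝ) : ℂ) * (((a i : ℝ) : ℂ) * ((A i j : ℂ) * v j))
        = (g * (starRingEnd ℂ) g) * ((A i j : ℂ) * v j) := by rw [hgg]; ring
      _ = g * ((starRingEnd ℂ) g * ((A i j : ℂ) * v j)) := by ring
      _ = g * ((a i * (B i j * a j) : ℝ) : ℂ) := by rw [ht]
      _ = ((a i : ℝ) : ℂ) * ((μ * v i) * ((B i j : ℂ) * (a j : ℂ))) := by
          rw [hg]; push_cast; ring
  -- Step D : eigenvector of B for μ⁻¹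
  set y : Fin N → ℂ := fun j => (u j : ℂ) * (a j : ℂ) / v j with hy
  have hyne : y ≠ 0 := by
    intro h
    have h0 := congrFun h j0
    simp only [hy, Pi.zero_apply, div_eq_zero_iff, mul_eq_zero] at h0
    rcases h0 with (h0 | h0) | h0
    · exact hj0 (by exact_mod_cast h0)
    · exact (hapos j0).ne' (by exact_mod_cast h0)
    · exact hvi0 j0 h0
  have hyeig : ∀ i, ∑ j, (B i j : ℂ) * y j = μ⁻¹ * y i := by
    intro i
    have hterm : ∀ j, (B i j : ℂ) * y j =
        (μ⁻¹ * (a i : ℂ) / v i) * ((A i j : ℂ) * (u j : ℂ)) := by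
      intro j
      have hR := R i j
      have hvj := hvi0 j
      have hvi := hvi0 i
      rw [hy]
      field_simp
      linear_combination (-(u j : ℂ)) * hR
    rw [Finset.sum_congr rfl (fun j _ => hterm j), ← Finset.mul_sum, hAuC i]
    rw [hy]
    field_simp
  have hmemB : μ⁻¹ ∈ spectrum ℂ (B.map Complex.ofReal) := by
    refine (mem_spectrum_iff_eig _ _).mpr ⟨y, hyne, funext fun i => ?_⟩
    rw [norm_mulVec_apply, hyeig i]
    rfl
  -- specRad B = 1
  have honeB : (1 : ℂ) ∈ spectrum ℂ (B.map Complex.ofReal) := by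
    refine (mem_spectrum_iff_eig _ _).mpr ⟨fun i => ((p i : ℝ) : ℂ), ?_, funext fun i => ?_⟩
    · intro h
      refine (hp j0).ne' (Complex.ofReal_eq_zero.mp ?_)
      simpa using congrFun h j0
    · rw [norm_mulVec_apply]
      have := ofReal_sum_mul B p i
      rw [this, hBu]
      simp
  have hbound : ∀ lam ∈ spectrum ℂ (B.map Complex.ofReal), ‖lam‖ ≤ 1 := by
    intro lam hlam
    obtain ⟨x, hx0, hxeq⟩ := (mem_spectrum_iff_eig _ _).mp hlam
    set b : Fin N → ℝ := fun i => ‖x i‖ with hb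
    have hBx : ∀ i, ∑ j, (B i j : ℂ) * x j = lam * x i := by
      intro i
      have := congrFun hxeq i
      rw [norm_mulVec_apply] at this
      simpa using this
    have hstep : ∀ i, ‖lam‖ * b i ≤ B.mulVec b i := by
      intro i
      rw [mulVec_apply']
      calc ‖lam‖ * b i = ‖∑ j, (B i j : ℂ) * x j‖ := by
            rw [hBx i, norm_mul]
        _ ≤ ∑ j, ‖(B i j : ℂ) * x j‖ := norm_sum_le _ _
        _ = ∑ j, B i j * b j := Finset.sum_congr rfl fun j _ => by
            rw [norm_mul, Complex.norm_real, Real.norm_eq_abs, abs_of_nonneg (hB0 i j)]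
    obtain ⟨j1, hj1⟩ : ∃ j, b j ≠ 0 := by
      by_contra h
      push_neg at h
      exact hx0 (funext fun i => by
        have := h i
        simpa [hb] using this)
    obtain ⟨i1, -, hi1⟩ := Finset.exists_max_image Finset.univ (fun i => b i / p i)
      ⟨j0, Finset.mem_univ _⟩
    set c : ℝ := b i1 / p i1 with hc
    have hcpos : 0 < c :=
      lt_of_lt_of_le (div_pos ((norm_nonneg _).lt_of_ne (Ne.symm hj1)) (hp j1))
        (hi1 j1 (Finset.mem_univ _))
    have hble : ∀ i, b i ≤ c * p i := by
      intro i
      have h := hi1 i (Finset.mem_univ i)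
      rw [div_le_div_iff₀ (hp i) (hp i1)] at h
      have hcp : c * p i = b i1 * p i / p i1 := by rw [hc]; ring
      rw [hcp, le_div_iff₀ (hp i1)]
      linarith
    have h1 : ‖lam‖ * b i1 ≤ c * p i1 := by
      calc ‖lam‖ * b i1 ≤ B.mulVec b i1 := hstep i1
        _ ≤ B.mulVec (fun j => c * p j) i1 := mulVec_mono' hB0 hble i1
        _ = c * B.mulVec p i1 := mulVec_const_mul _ _ _ _
        _ = c * p i1 := by rw [hBu]
    have h2 : c * p i1 = b i1 := div_mul_cancel₀ _ (hp i1).ne'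
    rw [← h2] at h1
    have h3 : 0 < c * p i1 := mul_pos hcpos (hp i1)
    nlinarith
  have hrad : specRad B = 1 := by
    unfold specRad
    apply le_antisymm
    · apply Real.sSup_le
      · rintro x ⟨lam, hlam, rfl⟩
        exact hbound lam hlam
      · exact zero_le_one
    · apply le_csSup
      · exact ⟨1, by rintro x ⟨lam, hlam, rfl⟩; exact hbound lam hlam⟩
      · exact ⟨1, honeB, norm_one⟩
  have hfinal := hprim μ⁻¹ hmemB (by rw [norm_inv, habs, inv_one, hrad])
  rw [hrad] at hfinal
  have h1 : μ⁻¹ = 1 := by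
    rw [hfinal]; norm_num
  exact inv_eq_one.mp h1
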